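/- Let n ≥ 1, let S ⊆ ZMod n generate the additive group ZMod n, and suppose Cay(ZMod n, S) is arc-transitive. Then the translation subgroup T̂ is normal in Aut(Cay(ZMod n, S)) if and only if T̂ is the unique regular cyclic subgroup of Aut(Cay(ZMod n, S)), i.e., every cyclic subgroup of Aut(Cay(ZMod n, S)) that is regular on the vertices equals T̂. -/

import Mathlib

/-- A permutation `e` is an automorphism of the digraph with adjacency `Adj`. -/
def IsDigraphAut {V : Type*} (Adj : V → V → Prop) (e : Equiv.Perm V) : Prop :=
  ∀ x y, Adj x y ↔ Adj (e x) (e y)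

/-- The automorphism group of a digraph, as a subgroup of the permutation group. -/
def autGroup {V : Type*} (Adj : V → V → Prop) : Subgroup (Equiv.Perm V) where
  carrier := {e | IsDigraphAut Adj e}
  one_mem' := by intro x y; exact Iff.rfl
  mul_mem' := by
    intro a b ha hb x y
    exact (hb x y).trans (ha (b x) (b y))
  inv_mem' := by
    intro a ha x y
    simpa using (ha (a⁻¹ x) (a⁻¹ y)).symm

/-- A digraph is arc-transitive if its automorphism group is transitive on arcs. -/
def ArcTransitive {V : Type*} (Adj : V → V → Prop) : Prop :=
  ∀ x y u v, Adj x y → Adj u v → ∃ e ∈ autGroup Adj, e x = u ∧ e y = v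

/-- A subgroup of the permutation group of `V` is regular on `V`. -/
def IsRegularSub {V : Type*} (H : Subgroup (Equiv.Perm V)) : Prop :=
  ∀ u v : V, ∃! h : H, (h : Equiv.Perm V) u = v

/-- A circulant: the automorphism group contains a regular cyclic subgroup. -/
def IsCirculant {V : Type*} (Adj : V → V → Prop) : Prop :=
  ∃ H : Subgroup (Equiv.Perm V), H ≤ autGroup Adj ∧ IsCyclic H ∧ IsRegularSub H

/-- A normal circulant: the automorphism group contains a regular cyclic subgroup
that is normal in the automorphism group. -/
def IsNormalCirculant {V : Type*} (Adj : V → V → Prop) : Prop :=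
  ∃ H : Subgroup (Equiv.Perm V), H ≤ autGroup Adj ∧ IsCyclic H ∧ IsRegularSub H ∧
    ∀ e ∈ autGroup Adj, ∀ h ∈ H, e * h * e⁻¹ ∈ H

/-- Tensor (direct) product of digraphs. -/
def tensorAdj {V₁ V₂ : Type*} (Adj₁ : V₁ → V₁ → Prop) (Adj₂ : V₂ → V₂ → Prop) :
    V₁ × V₂ → V₁ × V₂ → Prop :=
  fun p q => Adj₁ p.1 q.1 ∧ Adj₂ p.2 q.2

/-- Lexicographic product `Γ[Kbar_b]` with the edgeless digraph on `b` vertices. -/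
def lexAdj {V : Type*} (Adj : V → V → Prop) (b : ℕ) : V × Fin b → V × Fin b → Prop :=
  fun p q => Adj p.1 q.1

/-- Digraph isomorphism. -/
def DigraphIso {V₁ V₂ : Type*} (Adj₁ : V₁ → V₁ → Prop) (Adj₂ : V₂ → V₂ → Prop) : Prop :=
  ∃ e : V₁ ≃ V₂, ∀ x y, Adj₁ x y ↔ Adj₂ (e x) (e y)

/-- Connectedness: the reflexive–symmetric–transitive closure of adjacency
relates every pair of vertices. -/
def DigraphConnected {V : Type*} (Adj : V → V → Prop) : Prop :=
  ∀ u v : V, Relation.ReflTransGen (fun a b => Adj a b ∨ Adj b a) u v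

/-- R-thick digraph: two distinct vertices with the same in- and out-neighbourhoods. -/
def RThick {V : Type*} (Adj : V → V → Prop) : Prop :=
  ∃ u v : V, u ≠ v ∧ (∀ w, Adj u w ↔ Adj v w) ∧ (∀ w, Adj w u ↔ Adj w v)

/-- The directed 4-cycle on `ZMod 4`. -/
def C4Adj : ZMod 4 → ZMod 4 → Prop := fun x y => y - x = 1 ∨ y - x = 3

/-- Cayley digraph of a group `G` with connection set `S`. -/
def cayAdj (G : Type*) [Group G] (S : Set G) : G → G → Prop :=
  fun x y => y * x⁻¹ ∈ S

/-- The right-regular representation of `G` inside `Equiv.Perm G`. -/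
def rightReg (G : Type*) [Group G] : Subgroup (Equiv.Perm G) where
  carrier := {e | ∃ g : G, ∀ x, e x = x * g}
  one_mem' := ⟨1, by simp⟩
  mul_mem' := by
    rintro a b ⟨g, hg⟩ ⟨h, hh⟩
    exact ⟨h * g, fun x => by simp [Equiv.Perm.mul_apply, hh, hg, mul_assoc]⟩
  inv_mem' := by
    rintro a ⟨g, hg⟩
    refine ⟨g⁻¹, fun x => a.injective ?_⟩
    rw [show ∀ y, a (a⁻¹ y) = y from fun y => (Equiv.eq_symm_apply a).mp rfl, hg]
    simp

/-- Cayley digraph of `ZMod n` with connection set `S`. -/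
def zcayAdj (n : ℕ) (S : Set (ZMod n)) : ZMod n → ZMod n → Prop :=
  fun x y => y - x ∈ S

/-- The translation subgroup of `Equiv.Perm (ZMod n)`. -/
def transSub (n : ℕ) : Subgroup (Equiv.Perm (ZMod n)) where
  carrier := {e | ∃ g : ZMod n, ∀ x, e x = x + g}
  one_mem' := ⟨0, by simp⟩
  mul_mem' := by
    rintro a b ⟨g, hg⟩ ⟨h, hh⟩
    exact ⟨h + g, fun x => by simp [Equiv.Perm.mul_apply, hh, hg, add_assoc]⟩
  inv_mem' := by
    rintro a ⟨g, hg⟩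
    refine ⟨-g, fun x => a.injective ?_⟩
    rw [show ∀ y, a (a⁻¹ y) = y from fun y => (Equiv.eq_symm_apply a).mp rfl, hg]
    simp

section Aux

variable {n : ℕ} {S : Set (ZMod n)}

lemma transSub_le_aut : transSub n ≤ autGroup (zcayAdj n S) := by
  rintro e ⟨g, hg⟩ x y
  simp [zcayAdj, hg]

lemma mem_autGroup_iff {V : Type*} {Adj : V → V → Prop} {e : Equiv.Perm V} :
    e ∈ autGroup Adj ↔ IsDigraphAut Adj e := Iff.rfl

lemma addRight_mem_transSub (g : ZMod n) : Equiv.addRight g ∈ transSub n :=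
  ⟨g, fun _ => rfl⟩

lemma transSub_regular : IsRegularSub (transSub n) := by
  intro u v
  refine ⟨⟨Equiv.addRight (v - u), addRight_mem_transSub _⟩, by simp, ?_⟩
  rintro ⟨p, g, hg⟩ hp
  ext x
  simp only [Subgroup.coe_mk] at hp ⊢
  have : u + g = v := by simpa [hg] using hp
  simp [Equiv.coe_addRight, hg, ← this]

lemma pow_addRight_one (k : ℕ) (x : ZMod n) :
    ((Equiv.addRight (1 : ZMod n)) ^ k) x = x + (k : ZMod n) := by
  induction k with
  | zero => simp
  | succ k ih =>
    rw [pow_succ', Equiv.Perm.mul_apply, ih, Equiv.coe_addRight]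
    push_cast; ring

lemma transSub_cyclic [NeZero n] : IsCyclic (transSub n) := by
  refine ⟨⟨Equiv.addRight (1 : ZMod n), addRight_mem_transSub _⟩, ?_⟩
  rintro ⟨p, g, hg⟩
  have hp : (⟨p, g, hg⟩ : transSub n) =
      (⟨Equiv.addRight (1 : ZMod n), addRight_mem_transSub _⟩ : transSub n) ^ g.val := by
    apply Subtype.ext
    rw [SubmonoidClass.coe_pow]
    ext x
    simp only [Subgroup.coe_mk]
    rw [pow_addRight_one, hg, ZMod.natCast_val, ZMod.cast_id]
  exact ⟨(g.val : ℤ), by simp only []; rw [zpow_natCast, ← hp]⟩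

lemma affine_of_normal [NeZero n]
    (hnorm : ∀ e ∈ autGroup (zcayAdj n S), ∀ h ∈ transSub n, e * h * e⁻¹ ∈ transSub n)
    (e : Equiv.Perm (ZMod n)) (he : e ∈ autGroup (zcayAdj n S)) :
    ∃ w : ZMod n, IsUnit w ∧ ∀ x, e x = w * x + e 0 := by
  obtain ⟨w, hw⟩ := hnorm e he _ (addRight_mem_transSub (1 : ZMod n))
  have key : ∀ y : ZMod n, e (y + 1) = e y + w := by
    intro y
    have := hw (e y)
    simpa [Equiv.Perm.mul_apply] using this
  have hnat : ∀ k : ℕ, e (k : ZMod n) = w * (k : ZMod n) + e 0 := by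
    intro k
    induction k with
    | zero => simp
    | succ k ih => push_cast; rw [key, ih]; ring
  have hall : ∀ x : ZMod n, e x = w * x + e 0 := by
    intro x
    have := hnat x.val
    rwa [ZMod.natCast_val, ZMod.cast_id] at this
  refine ⟨w, ?_, hall⟩
  have h1 : e (e.symm (1 + e 0)) = 1 + e 0 := e.apply_symm_apply _
  rw [hall] at h1
  exact IsUnit.of_mul_eq_one _ (by linear_combination h1 : w * e.symm (1 + e 0) = 1)

end Aux

theorem stmt9 (n : ℕ) (hn : 1 ≤ n) (S : Set (ZMod n))
    (hgen : AddSubgroup.closure S = ⊤)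
    (hat : ArcTransitive (zcayAdj n S)) :
    (∀ e ∈ autGroup (zcayAdj n S), ∀ h ∈ transSub n, e * h * e⁻¹ ∈ transSub n) ↔
    (∀ H : Subgroup (Equiv.Perm (ZMod n)), H ≤ autGroup (zcayAdj n S) →
      IsCyclic H → IsRegularSub H → H = transSub n) := by
  classical
  haveI : NeZero n := ⟨by omega⟩
  constructor
  · intro hnorm H hHA hHcyc hHreg
    obtain rfl | hn2 : n = 1 ∨ 2 ≤ n := by omega
    · have hperm : ∀ p : Equiv.Perm (ZMod 1), p = 1 := fun p =>
        Equiv.ext fun x => Subsingleton.elim _ _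
      ext x
      rw [hperm x]
      simp [one_mem]
    haveI : Fact (1 < n) := ⟨by omega⟩
    obtain ⟨g, hg_gen⟩ := hHcyc.exists_generator
    set h : Equiv.Perm (ZMod n) := (g : Equiv.Perm (ZMod n)) with hh
    have hhA : h ∈ autGroup (zcayAdj n S) := hHA g.2
    obtain ⟨m, hm_unit, hm⟩ := affine_of_normal hnorm h hhA
    set b : ZMod n := h 0 with hb
    set o : ℕ → ZMod n := fun k => (h ^ k) 0 with ho
    have hcov : ∀ v : ZMod n, ∃ k : ℕ, o k = v := by
      intro v
      obtain ⟨η, hη0, -⟩ := hHreg 0 v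
      have hmem : η ∈ Submonoid.powers g := mem_powers_iff_mem_zpowers.2 (hg_gen η)
      obtain ⟨k, hk⟩ := hmem
      refine ⟨k, ?_⟩
      show (h ^ k) 0 = v
      calc (h ^ k) 0 = ((g ^ k : H) : Equiv.Perm (ZMod n)) 0 := by
            rw [SubmonoidClass.coe_pow]
        _ = (η : Equiv.Perm (ZMod n)) 0 := by
            have hk' : g ^ k = η := hk
            rw [hk']
        _ = v := hη0
    have ho0 : o 0 = 0 := rfl
    have hostep : ∀ k, o (k + 1) = m * o k + b := by
      intro k
      show (h ^ (k + 1)) 0 = m * ((h ^ k) 0) + b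
      rw [pow_succ', Equiv.Perm.mul_apply, hm]
    by_cases hr0 : m = 1
    · -- m = 1 : H = transSub n
      have hhT : h ∈ transSub n := ⟨b, fun x => by rw [hm x, hr0, one_mul]⟩
      have hHle : H ≤ transSub n := by
        intro p hp
        obtain ⟨z, hz⟩ := hg_gen ⟨p, hp⟩
        have hz' : (h ^ z : Equiv.Perm (ZMod n)) = p := by
          have := congrArg (Subtype.val) hz
          rw [SubgroupClass.coe_zpow] at this
          exact this
        rw [← hz']
        exact zpow_mem hhT z
      refine le_antisymm hHle ?_
      intro p hp
      obtain ⟨w, hw⟩ := hp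
      obtain ⟨η, hη0, -⟩ := hHreg 0 w
      have hηT : (η : Equiv.Perm (ZMod n)) ∈ transSub n := hHle η.2
      obtain ⟨w', hw'⟩ := hηT
      have hww : w' = w := by
        have := hw' 0
        rw [hη0, zero_add] at this
        exact this.symm
      have hηp : (η : Equiv.Perm (ZMod n)) = p := by
        ext x
        rw [hw', hw, hww]
      exact hηp ▸ η.2
    · exfalso
      obtain ⟨r, hrdef⟩ : ∃ r : ZMod n, r = m - 1 := ⟨_, rfl⟩
      have hr : r ≠ 0 := by
        rw [hrdef]
        exact sub_ne_zero.mpr hr0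
      have hmr : m = r + 1 := by rw [hrdef]; ring
      -- D1
      have horb : ∀ k, r * o k = (m ^ k - 1) * b := by
        intro k
        induction k with
        | zero => simp [ho0]
        | succ k ih =>
          rw [hostep k]
          have hexp : r * (m * o k + b) = m * (r * o k) + r * b := by ring
          rw [hexp, ih, hrdef, pow_succ]
          ring
      have hσ : ∀ k, ∃ σ, o k = σ * b := by
        intro k
        induction k with
        | zero => exact ⟨0, by simp [ho0]⟩
        | succ k ih =>
          obtain ⟨σ, hσ⟩ := ih
          exact ⟨m * σ + 1, by rw [hostep, hσ]; ring⟩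
      have hb_unit : IsUnit b := by
        obtain ⟨k, hk⟩ := hcov 1
        obtain ⟨σ, hσk⟩ := hσ k
        have hσb : σ * b = 1 := by rw [← hσk]; exact hk
        exact IsUnit.of_mul_eq_one _ (by rw [mul_comm]; exact hσb)
      have hD1 : ∀ x : ZMod n, ∃ k : ℕ, m ^ k - 1 = r * x := by
        intro x
        obtain ⟨k, hk⟩ := hcov (x * b)
        refine ⟨k, ?_⟩
        have h2 : (r * x) * b = (m ^ k - 1) * b := by
          have := horb k
          rw [hk] at this
          rw [← this]
          ring
        exact (hb_unit.mul_right_cancel h2).symm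
      -- the set K = r * ZMod n
      set K : Set (ZMod n) := {x | ∃ t, x = r * t} with hK
      have hK0 : (0 : ZMod n) ∈ K := ⟨0, by ring⟩
      have hKr : r ∈ K := ⟨1, by ring⟩
      have hKadd : ∀ {x y : ZMod n}, x ∈ K → y ∈ K → x + y ∈ K := by
        rintro x y ⟨t, rfl⟩ ⟨s, rfl⟩
        exact ⟨t + s, by ring⟩
      have hKneg : ∀ {x : ZMod n}, x ∈ K → -x ∈ K := by
        rintro x ⟨t, rfl⟩
        exact ⟨-t, by ring⟩
      have h1K : (1 : ZMod n) ∉ K := by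
        rintro ⟨t, ht⟩
        obtain ⟨k, hk⟩ := hD1 (-t)
        have hmk : m ^ k = 0 := by
          have : m ^ k - 1 = -(1 : ZMod n) := by rw [hk, mul_neg, ← ht]
          linear_combination this
        have hu0 : IsUnit (0 : ZMod n) := hmk ▸ hm_unit.pow k
        rw [isUnit_zero_iff] at hu0
        exact one_ne_zero hu0.symm
      -- multiplication by m preserves S
      have hmS : ∀ s ∈ S, m * s ∈ S := by
        intro s hs
        have hμA : Equiv.addRight (-b) * h ∈ autGroup (zcayAdj n S) :=
          mul_mem (transSub_le_aut (addRight_mem_transSub _)) hhA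
        have hμ : ∀ x, (Equiv.addRight (-b) * h) x = m * x := by
          intro x
          rw [Equiv.Perm.mul_apply, hm x, Equiv.coe_addRight]
          ring
        have hiff := hμA 0 s
        simp only [zcayAdj, hμ, mul_zero, sub_zero] at hiff
        exact hiff.1 hs
      have hmpowS : ∀ k : ℕ, ∀ s ∈ S, m ^ k * s ∈ S := by
        intro k
        induction k with
        | zero => intro s hs; simpa using hs
        | succ k ih =>
          intro s hs
          have := hmS _ (ih s hs)
          rw [pow_succ]
          have hexp : m ^ k * m * s = m * (m ^ k * s) := by ring
          rw [hexp]
          exact this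
      -- every element of S is a unit
      have hSunit : ∀ s ∈ S, IsUnit s := by
        intro s hs
        have hsub : S ⊆ (AddSubgroup.zmultiples s : AddSubgroup (ZMod n)) := by
          intro s' hs'
          obtain ⟨e, heA, he0, hes⟩ := hat 0 s 0 s'
            (by simpa [zcayAdj] using hs) (by simpa [zcayAdj] using hs')
          obtain ⟨w, -, hw⟩ := affine_of_normal hnorm e heA
          have hs'w : s' = w * s := by rw [← hes, hw s, he0, add_zero]
          rw [hs'w]
          refine ⟨(w.val : ℤ), ?_⟩
          show (w.val : ℤ) • s = w * s
          rw [zsmul_eq_mul]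
          push_cast
          rw [ZMod.natCast_val, ZMod.cast_id]
        have h1 : (1 : ZMod n) ∈ AddSubgroup.zmultiples s := by
          have hle := (AddSubgroup.closure_le (AddSubgroup.zmultiples s)).2 hsub
          rw [hgen] at hle
          exact hle (AddSubgroup.mem_top 1)
        obtain ⟨z, hz⟩ := h1
        have hz : (z : ZMod n) * s = 1 := by rw [← zsmul_eq_mul]; exact hz
        exact IsUnit.of_mul_eq_one _ (by rw [mul_comm]; exact hz)
      -- S is invariant under translation by K
      have hSK : ∀ s ∈ S, ∀ x : ZMod n, s + r * x ∈ S := by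
        intro s hs x
        obtain ⟨su, hsu⟩ := hSunit s hs
        obtain ⟨k, hk⟩ := hD1 (x * (↑su⁻¹ : ZMod n))
        have hk' : m ^ k = 1 + r * (x * (↑su⁻¹ : ZMod n)) := by linear_combination hk
        have hinv : (↑su⁻¹ : ZMod n) * s = 1 := by rw [← hsu]; exact su.inv_mul
        have heq2 : (1 + r * (x * (↑su⁻¹ : ZMod n))) * s = s + r * x := by
          calc (1 + r * (x * (↑su⁻¹ : ZMod n))) * s
              = s + r * x * ((↑su⁻¹ : ZMod n) * s) := by ring
            _ = s + r * x := by rw [hinv, mul_one]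
        have heq : s + r * x = m ^ k * s := by rw [hk', heq2]
        rw [heq]
        exact hmpowS k s hs
      have hSshift : ∀ z c : ZMod n, c ∈ K → (z ∈ S ↔ z + c ∈ S) := by
        intro z c hc
        constructor
        · intro hz
          obtain ⟨t, rfl⟩ := hc
          exact hSK z hz t
        · intro hz
          obtain ⟨t, ht⟩ := hc
          have hzc := hSK _ hz (-t)
          have : z + c + r * (-t) = z := by rw [ht]; ring
          rwa [this] at hzc
      -- the extra automorphism f
      set f : Equiv.Perm (ZMod n) :=
        { toFun := fun x => if x ∈ K then x + r else x
          invFun := fun x => if x ∈ K then x - r else x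
          left_inv := by
            intro x
            by_cases hx : x ∈ K
            · simp only [if_pos hx, if_pos (hKadd hx hKr), add_sub_cancel_right]
            · simp only [if_neg hx]
          right_inv := by
            intro x
            by_cases hx : x ∈ K
            · have : x - r ∈ K := by
                rw [sub_eq_add_neg]
                exact hKadd hx (hKneg hKr)
              simp only [if_pos hx, if_pos this, sub_add_cancel]
            · simp only [if_neg hx] } with hf
      have hfval : ∀ x, f x = if x ∈ K then x + r else x := fun _ => rfl
      have hfA : f ∈ autGroup (zcayAdj n S) := by
        intro x y
        show y - x ∈ S ↔ f y - f x ∈ S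
        rw [hfval, hfval]
        by_cases hx : x ∈ K <;> by_cases hy : y ∈ K
        · rw [if_pos hx, if_pos hy]
          have : y + r - (x + r) = y - x := by ring
          rw [this]
        · rw [if_pos hx, if_neg hy]
          have : y - (x + r) = (y - x) + (-r) := by ring
          rw [this]
          exact hSshift (y - x) (-r) (hKneg hKr)
        · rw [if_neg hx, if_pos hy]
          have : y + r - x = (y - x) + r := by ring
          rw [this]
          exact hSshift (y - x) r hKr
        · rw [if_neg hx, if_neg hy]
      obtain ⟨u, -, hu⟩ := affine_of_normal hnorm f hfA
      have hf0 : f 0 = r := by rw [hfval, if_pos hK0, zero_add]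
      have hfGen : ∀ x, f x = u * x + r := by
        intro x
        rw [hu x, hf0]
      have e1 : u = 1 - r := by
        have h1 : f 1 = 1 := by rw [hfval, if_neg h1K]
        rw [hfGen] at h1
        linear_combination h1
      have e2 : (2 : ZMod n) ∈ K := by
        by_contra h2K
        have h2 : f 2 = 2 := by rw [hfval, if_neg h2K]
        rw [hfGen, e1] at h2
        exact hr (by linear_combination -h2)
      have e3 : 2 * r = 0 := by
        have h2 : f 2 = 2 + r := by rw [hfval, if_pos e2]
        rw [hfGen, e1] at h2
        linear_combination -h2
      have e4 : r * r = 0 := by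
        have h2 : f r = r + r := by rw [hfval, if_pos hKr]
        rw [hfGen, e1] at h2
        linear_combination -h2
      have hm2 : m ^ 2 = 1 := by
        rw [hmr]
        linear_combination e4 + e3
      have hc : (2 * b + r * b) ∈ K := by
        obtain ⟨t2, ht2⟩ := e2
        exact ⟨t2 * b + b, by linear_combination b * ht2⟩
      have hstep2 : ∀ k, o (k + 2) = o k + (2 * b + r * b) := by
        intro k
        have h1 : o (k + 2) = m * o (k + 1) + b := hostep (k + 1)
        rw [h1, hostep k]
        have hexp : m * (m * o k + b) + b = m ^ 2 * o k + (m * b + b) := by ring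
        rw [hexp, hm2, one_mul, hmr]
        ring
      have hoK : ∀ k, (o k ∈ K ∨ o k - b ∈ K) ∧ (o (k + 1) ∈ K ∨ o (k + 1) - b ∈ K) := by
        intro k
        induction k with
        | zero =>
          constructor
          · left; rw [ho0]; exact hK0
          · right
            have h1 : o 1 = b := by rw [hostep 0, ho0]; ring
            rw [h1, sub_self]
            exact hK0
        | succ k ih =>
          refine ⟨ih.2, ?_⟩
          have hs2 : o (k + 1 + 1) = o k + (2 * b + r * b) := hstep2 k
          rcases ih.1 with hk | hk
          · left
            rw [hs2]
            exact hKadd hk hc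
          · right
            rw [hs2]
            have : o k + (2 * b + r * b) - b = (o k - b) + (2 * b + r * b) := by ring
            rw [this]
            exact hKadd hk hc
      have hKsmall : ∀ x ∈ K, x = 0 ∨ x = r := by
        rintro x ⟨t, rfl⟩
        have hnat : ∀ j : ℕ, (j : ZMod n) * r = 0 ∨ (j : ZMod n) * r = r := by
          intro j
          induction j with
          | zero => left; simp
          | succ j ih =>
            push_cast
            rcases ih with hj | hj
            · right; rw [add_mul, hj, one_mul, zero_add]
            · left
              rw [add_mul, hj, one_mul]
              linear_combination e3
        have := hnat t.val
        rw [ZMod.natCast_val, ZMod.cast_id] at this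
        rcases this with hcase | hcase
        · left; rw [mul_comm]; exact hcase
        · right; rw [mul_comm]; exact hcase
      have hall : ∀ v : ZMod n, v = 0 ∨ v = r ∨ v = b ∨ v = b + r := by
        intro v
        obtain ⟨k, hk⟩ := hcov v
        rcases (hoK k).1 with hcase | hcase
        · rw [hk] at hcase
          rcases hKsmall _ hcase with hv | hv
          · exact Or.inl hv
          · exact Or.inr (Or.inl hv)
        · rw [hk] at hcase
          rcases hKsmall _ hcase with hv | hv
          · refine Or.inr (Or.inr (Or.inl ?_))
            linear_combination hv
          · refine Or.inr (Or.inr (Or.inr ?_))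
            linear_combination hv
      have hn4 : n ≤ 4 := by
        have hsub : (Finset.univ : Finset (ZMod n)) ⊆ {0, r, b, b + r} := by
          intro v _
          rcases hall v with hv | hv | hv | hv <;> simp [hv]
        have hcard := Finset.card_le_card hsub
        have h0 := Finset.card_insert_le (0 : ZMod n) ({r, b, b + r} : Finset (ZMod n))
        have h1 := Finset.card_insert_le r ({b, b + r} : Finset (ZMod n))
        have h2 := Finset.card_insert_le b ({b + r} : Finset (ZMod n))
        rw [Finset.card_univ, ZMod.card] at hcard
        simp only [Finset.card_singleton] at h2
        omega
      interval_cases n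
      · -- n = 2
        have hr1 : r = 1 := (by decide : ∀ x : ZMod 2, x ≠ 0 → x = 1) r hr
        exact h1K ⟨1, by rw [hr1, mul_one]⟩
      · -- n = 3
        exact hr ((by decide : ∀ x : ZMod 3, 2 * x = 0 → x = 0) r e3)
      · -- n = 4
        have hr2 : r = 2 := (by decide : ∀ x : ZMod 4, x ≠ 0 → 2 * x = 0 → x = 2) r hr e3
        have hc0 : 2 * b + r * b = 0 := by
          rw [hr2]
          have h4 : (4 : ZMod 4) = 0 := by decide
          linear_combination b * h4
        have hper : ∀ k, (o k = 0 ∨ o k = b) ∧ (o (k + 1) = 0 ∨ o (k + 1) = b) := by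
          intro k
          induction k with
          | zero =>
            refine ⟨Or.inl ho0, Or.inr ?_⟩
            rw [hostep 0, ho0]; ring
          | succ k ih =>
            refine ⟨ih.2, ?_⟩
            have hs2 : o (k + 1 + 1) = o k + (2 * b + r * b) := hstep2 k
            rw [hs2, hc0, add_zero]
            exact ih.1
        obtain ⟨i, hi⟩ := hcov 1
        obtain ⟨j, hj⟩ := hcov 3
        rcases (hper i).1 with h1' | h1'
        · rw [hi] at h1'
          exact (by decide : (1 : ZMod 4) ≠ 0) h1'
        · rw [hi] at h1'
          rcases (hper j).1 with h3' | h3'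
          · rw [hj] at h3'
            exact (by decide : (3 : ZMod 4) ≠ 0) h3'
          · rw [hj] at h3'
            rw [← h1'] at h3'
            exact (by decide : (3 : ZMod 4) ≠ 1) h3'
  · intro huniq e heA t htT
    set H : Subgroup (Equiv.Perm (ZMod n)) :=
      (transSub n).map (MulAut.conj e).toMonoidHom with hH
    have hmem : ∀ x : Equiv.Perm (ZMod n),
        x ∈ H ↔ ∃ τ ∈ transSub n, e * τ * e⁻¹ = x := by
      intro x
      simp [hH, Subgroup.mem_map, MulAut.conj_apply]
    have hHle : H ≤ autGroup (zcayAdj n S) := by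
      intro x hx
      obtain ⟨τ, hτ, rfl⟩ := (hmem x).1 hx
      exact mul_mem (mul_mem heA (transSub_le_aut hτ)) (inv_mem heA)
    have hHcyc : IsCyclic H := by
      haveI := transSub_cyclic (n := n)
      have eqv := Subgroup.equivMapOfInjective (transSub n)
        (MulAut.conj e).toMonoidHom (MulAut.conj e).injective
      exact isCyclic_of_surjective eqv eqv.surjective
    have hHreg : IsRegularSub H := by
      intro u v
      obtain ⟨⟨τ, hτ⟩, hτ0, hτu⟩ := transSub_regular (n := n) (e⁻¹ u) (e⁻¹ v)
      simp only [Subgroup.coe_mk] at hτ0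
      refine ⟨⟨e * τ * e⁻¹, (hmem _).2 ⟨τ, hτ, rfl⟩⟩, ?_, ?_⟩
      · simp only [Subgroup.coe_mk, Equiv.Perm.mul_apply]
        rw [hτ0, show ∀ y, e (e⁻¹ y) = y from fun y => (Equiv.eq_symm_apply e).mp rfl]
      · rintro ⟨x, hx⟩ hxval
        obtain ⟨τ', hτ', rfl⟩ := (hmem x).1 hx
        simp only [Subgroup.coe_mk, Equiv.Perm.mul_apply] at hxval
        have : τ' (e⁻¹ u) = e⁻¹ v := by
          have := congrArg e.symm hxval
          simpa using this
        have := hτu ⟨τ', hτ'⟩ (by simpa using this)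
        apply Subtype.ext
        simp only [Subgroup.coe_mk]
        rw [show τ' = τ from congrArg Subtype.val this]
    have := huniq H hHle hHcyc hHreg
    rw [← this]
    exact (hmem _).2 ⟨t, htT, rfl⟩
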